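/- Fix d ≥ 2. In the polynomial ring ℂ[m_0,…,m_d], let E be the 2×d matrix whose (1,c) entry is c·m_{c−1} and whose (2,c) entry is m_c, for c = 1,…,d (so the rows are (m_0, 2m_1, 3m_2, …, d·m_{d−1}) and (m_1, m_2, …, m_d)). Then the ideal I_2(E) generated by the 2×2 minors of E is prime, and it equals the vanishing ideal of the affine cone C_exp = { t·(0!, 1!·λ, 2!·λ², …, d!·λ^d) ∈ ℂ^{d+1} : t, λ ∈ ℂ } over the exponential moment parameterization; that is, a polynomial f ∈ ℂ[m_0,…,m_d] vanishes at every point of C_exp if and only if f ∈ I_2(E). In particular, the exponential moment variety M_d^exp ⊆ ℙ^d is a rational normal curve. -/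

import Mathlib

open MvPolynomial

/-- The `2 × d` matrix `E` of the exponential moment variety, in `ℂ[m₀,…,m_d]`: its `c`-th
column, for `1 ≤ c ≤ d`, is `(c·m_{c-1}, m_c)ᵀ`. -/
noncomputable def expMatrix (d : ℕ) :
    Matrix (Fin 2) (Fin d) (MvPolynomial (Fin (d + 1)) ℂ) :=
  Matrix.of fun r c =>
    ![C ((c.val : ℂ) + 1) * X ⟨c.val, by have := c.isLt; omega⟩,
      X ⟨c.val + 1, by have := c.isLt; omega⟩] r

/-- The ideal `I₂(E)` generated by all `2 × 2` minors of `E`. -/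
noncomputable def expIdeal (d : ℕ) : Ideal (MvPolynomial (Fin (d + 1)) ℂ) :=
  Ideal.span
    { p | ∃ s : Fin 2 → Fin d, StrictMono s ∧ p = ((expMatrix d).submatrix id s).det }

namespace ExpMoment

variable {d : ℕ}

/-- the parameterization map -/
noncomputable def phi (d : ℕ) : MvPolynomial (Fin (d + 1)) ℂ →ₐ[ℂ] MvPolynomial (Fin 2) ℂ :=
  aeval fun i => (i.val.factorial : ℂ) • (X 0 * X 1 ^ i.val)

def degA (α : Fin (d + 1) →₀ ℕ) : ℕ := ∑ i, α i
def wtA (α : Fin (d + 1) →₀ ℕ) : ℕ := ∑ i, i.val * α i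
def sqA (α : Fin (d + 1) →₀ ℕ) : ℕ := ∑ i, i.val * i.val * α i
noncomputable def cC (α : Fin (d + 1) →₀ ℕ) : ℂ := ∏ i, (i.val.factorial : ℂ) ^ α i

lemma cC_ne_zero (α : Fin (d + 1) →₀ ℕ) : cC α ≠ 0 := by
  refine Finset.prod_ne_zero_iff.2 fun i _ => pow_ne_zero _ ?_
  exact_mod_cast Nat.cast_ne_zero.2 (Nat.factorial_ne_zero _)

lemma degA_add (α β : Fin (d + 1) →₀ ℕ) : degA (α + β) = degA α + degA β := by
  simp [degA, Finset.sum_add_distrib]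

lemma wtA_add (α β : Fin (d + 1) →₀ ℕ) : wtA (α + β) = wtA α + wtA β := by
  simp [wtA, Nat.mul_add, Finset.sum_add_distrib]

lemma sqA_add (α β : Fin (d + 1) →₀ ℕ) : sqA (α + β) = sqA α + sqA β := by
  simp [sqA, Nat.mul_add, Finset.sum_add_distrib]

lemma cC_add (α β : Fin (d + 1) →₀ ℕ) : cC (α + β) = cC α * cC β := by
  simp [cC, pow_add, Finset.prod_mul_distrib]

lemma degA_single (a : Fin (d + 1)) (m : ℕ) : degA (Finsupp.single a m) = m := by
  simp [degA, Finsupp.single_apply]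

lemma wtA_single (a : Fin (d + 1)) (m : ℕ) : wtA (Finsupp.single a m) = a.val * m := by
  simp [wtA, Finsupp.single_apply]

lemma sqA_single (a : Fin (d + 1)) (m : ℕ) :
    sqA (Finsupp.single a m) = a.val * a.val * m := by
  simp [sqA, Finsupp.single_apply]

lemma cC_single (a : Fin (d + 1)) (m : ℕ) :
    cC (Finsupp.single a m) = (a.val.factorial : ℂ) ^ m := by
  simp [cC, Finsupp.single_apply]

lemma sqA_le (α : Fin (d + 1) →₀ ℕ) : sqA α ≤ degA α * d * d := by
  calc sqA α ≤ ∑ i : Fin (d + 1), d * d * α i := by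
        refine Finset.sum_le_sum fun i _ => ?_
        have : i.val ≤ d := by omega
        exact Nat.mul_le_mul_right _ (Nat.mul_le_mul this this)
    _ = degA α * d * d := by
        rw [degA, Finset.sum_mul, Finset.sum_mul]
        exact Finset.sum_congr rfl fun i _ => by ring

lemma phi_monomial (α : Fin (d + 1) →₀ ℕ) (a : ℂ) :
    phi d (monomial α a) =
      monomial (Finsupp.single 0 (degA α) + Finsupp.single 1 (wtA α)) (a * cC α) := by
  rw [phi, aeval_monomial]
  rw [Finsupp.prod_fintype _ _ (fun i => pow_zero _)]
  have : ∀ i : Fin (d + 1),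
      ((i.val.factorial : ℂ) • (X 0 * X 1 ^ i.val) : MvPolynomial (Fin 2) ℂ) ^ α i
        = C ((i.val.factorial : ℂ) ^ α i) * (X 0 ^ α i * X 1 ^ (i.val * α i)) := by
    intro i
    rw [smul_eq_C_mul, mul_pow, mul_pow, ← C_pow, ← pow_mul]
  rw [Finset.prod_congr rfl fun i _ => this i]
  rw [Finset.prod_mul_distrib, Finset.prod_mul_distrib]
  rw [← map_prod (C : ℂ →+* MvPolynomial (Fin 2) ℂ),
    Finset.prod_pow_eq_pow_sum, Finset.prod_pow_eq_pow_sum]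
  rw [X_pow_eq_monomial, X_pow_eq_monomial, monomial_mul, one_mul,
    algebraMap_eq, ← degA, ← wtA, ← cC, C_mul_monomial, C_mul_monomial, mul_one]

lemma strictMono_fin2 {m : ℕ} (s : Fin 2 → Fin m) (h : s 0 < s 1) : StrictMono s := by
  intro a b hab
  fin_cases a <;> fin_cases b <;> simp_all

lemma det_eq (s : Fin 2 → Fin d) :
    ((expMatrix d).submatrix id s).det =
      C (((s 0).val : ℂ) + 1) * (X ⟨(s 0).val, by have := (s 0).isLt; omega⟩ *
          X ⟨(s 1).val + 1, by have := (s 1).isLt; omega⟩) -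
        C (((s 1).val : ℂ) + 1) * (X ⟨(s 1).val, by have := (s 1).isLt; omega⟩ *
          X ⟨(s 0).val + 1, by have := (s 0).isLt; omega⟩) := by
  rw [Matrix.det_fin_two]
  simp [expMatrix, Matrix.submatrix]
  ring

lemma rel_mem (i j : Fin (d + 1)) (hi0 : 0 < i.val) (hij : i ≤ j) (hjd : j.val < d) :
    C ((i.val : ℂ)) * (X (⟨i.val - 1, by omega⟩ : Fin (d + 1)) *
        X (⟨j.val + 1, by omega⟩ : Fin (d + 1))) -
      C ((j.val : ℂ) + 1) * (X j * X i) ∈ expIdeal d := by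
  have hlt : (⟨i.val - 1, by omega⟩ : Fin d) < ⟨j.val, hjd⟩ := by
    simp [Fin.lt_def]; omega
  have hmem : ((expMatrix d).submatrix id ![⟨i.val - 1, by omega⟩, ⟨j.val, hjd⟩]).det
      ∈ expIdeal d := by
    apply Ideal.subset_span
    exact ⟨_, strictMono_fin2 _ (by simpa using hlt), rfl⟩
  rw [det_eq] at hmem
  simp only [Matrix.cons_val_zero, Matrix.cons_val_one, Matrix.head_cons] at hmem
  convert hmem using 2
  · congr 1
    rw [Nat.cast_sub (by omega : 1 ≤ i.val), Nat.cast_one]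
    ring
  · congr 2
    refine congrArg X (Fin.ext ?_)
    simp only [Fin.val_mk]
    omega

noncomputable def nfExp (d n w : ℕ) : Fin (d + 1) →₀ ℕ :=
  Finsupp.single ⟨0, by omega⟩ (if w % d = 0 then n - w / d else n - w / d - 1) +
    Finsupp.single ⟨min (w % d) d, by omega⟩ (if w % d = 0 then 0 else 1) +
    Finsupp.single ⟨d, by omega⟩ (w / d)

lemma eq_nf (hd : 2 ≤ d) (α : Fin (d + 1) →₀ ℕ)
    (h : ∀ i j : Fin (d + 1), 0 < i.val → j.val < d → i ≤ j → 1 ≤ α i → 1 ≤ α j →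
      i = j ∧ α i < 2) :
    α = nfExp d (degA α) (wtA α) := by
  have hd1 : 0 < d := by omega
  set i0 : Fin (d + 1) := ⟨0, by omega⟩ with hi0def
  set idd : Fin (d + 1) := ⟨d, by omega⟩ with hiddef
  by_cases hm : ∃ m : Fin (d + 1), 0 < m.val ∧ m.val < d ∧ 0 < α m
  · obtain ⟨m, hm1, hm2, hm3⟩ := hm
    have hαm : α m = 1 := by
      have := h m m hm1 hm2 le_rfl hm3 hm3; omega
    have hother : ∀ x : Fin (d + 1), 0 < x.val → x.val < d → x ≠ m → α x = 0 := by
      intro x hx1 hx2 hxm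
      by_contra hne
      have hx3 : 1 ≤ α x := by omega
      rcases lt_or_gt_of_ne (fun hc : x.val = m.val => hxm (Fin.ext hc)) with hlt | hgt
      · exact hxm (h x m hx1 hm2 (by omega) hx3 hm3).1
      · exact hxm ((h m x hm1 hx2 (by omega) hm3 hx3).1).symm
    have hmi0 : m ≠ i0 := fun hc => by rw [hc] at hm1; simp [hi0def] at hm1
    have hmidd : m ≠ idd := fun hc => by rw [hc] at hm2; simp [hiddef] at hm2
    have hi0idd : i0 ≠ idd := fun hc => by
      have : (0 : ℕ) = d := congrArg Fin.val hc; omega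
    have hdec : α = Finsupp.single i0 (α i0) + Finsupp.single m 1 +
        Finsupp.single idd (α idd) := by
      ext x
      simp only [Finsupp.coe_add, Pi.add_apply]
      rcases eq_or_ne x i0 with rfl | hx0
      · rw [Finsupp.single_eq_same, Finsupp.single_eq_of_ne' hmi0,
          Finsupp.single_eq_of_ne' hi0idd.symm]
        omega
      · rcases eq_or_ne x m with rfl | hxm
        · rw [Finsupp.single_eq_same, Finsupp.single_eq_of_ne' (Ne.symm hx0),
            Finsupp.single_eq_of_ne' hmidd.symm, hαm]
          omega
        · rcases eq_or_ne x idd with rfl | hxd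
          · rw [Finsupp.single_eq_same, Finsupp.single_eq_of_ne' (Ne.symm hx0),
              Finsupp.single_eq_of_ne' (Ne.symm hxm)]
            omega
          · rw [Finsupp.single_eq_of_ne' (Ne.symm hx0), Finsupp.single_eq_of_ne' (Ne.symm hxm),
              Finsupp.single_eq_of_ne' (Ne.symm hxd)]
            have hx1 : 0 < x.val := by
              rcases Nat.eq_zero_or_pos x.val with hz | hp
              · exact absurd (Fin.ext hz : x = i0) hx0
              · exact hp
            have hx2 : x.val < d := by
              have := x.isLt
              rcases Nat.lt_or_ge x.val d with hlt | hge
              · exact hlt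
              · exact absurd (Fin.ext (show x.val = d by omega) : x = idd) hxd
            simpa using hother x hx1 hx2 hxm
    have hvi0 : i0.val = 0 := rfl
    have hvidd : idd.val = d := rfl
    have hn : degA α = α i0 + 1 + α idd := by
      conv_lhs => rw [hdec]
      rw [degA_add, degA_add, degA_single, degA_single, degA_single]
    have hw : wtA α = m.val + d * α idd := by
      conv_lhs => rw [hdec]
      rw [wtA_add, wtA_add, wtA_single, wtA_single, wtA_single, hvi0, hvidd]
      omega
    have hmod : wtA α % d = m.val := by
      rw [hw, Nat.add_mul_mod_self_left, Nat.mod_eq_of_lt hm2]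
    have hdiv : wtA α / d = α idd := by
      rw [hw, Nat.add_mul_div_left _ _ hd1, Nat.div_eq_of_lt hm2, Nat.zero_add]
    have em : (⟨min (wtA α % d) d, by omega⟩ : Fin (d + 1)) = m :=
      Fin.ext (show min (wtA α % d) d = m.val by rw [hmod]; exact min_eq_left hm2.le)
    unfold nfExp
    rw [em, hmod, hdiv, if_neg (by omega), if_neg (by omega), hn]
    rw [show α i0 + 1 + α idd - α idd - 1 = α i0 by omega]
    exact hdec
  · push_neg at hm
    have hzero : ∀ x : Fin (d + 1), 0 < x.val → x.val < d → α x = 0 := by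
      intro x hx1 hx2
      have := hm x hx1 hx2; omega
    have hi0idd : i0 ≠ idd := fun hc => by
      have : (0 : ℕ) = d := congrArg Fin.val hc; omega
    have hdec : α = Finsupp.single i0 (α i0) + Finsupp.single idd (α idd) := by
      ext x
      simp only [Finsupp.coe_add, Pi.add_apply]
      rcases eq_or_ne x i0 with rfl | hx0
      · rw [Finsupp.single_eq_same, Finsupp.single_eq_of_ne' hi0idd.symm]
        omega
      · rcases eq_or_ne x idd with rfl | hxd
        · rw [Finsupp.single_eq_same, Finsupp.single_eq_of_ne' (Ne.symm hx0)]
          omega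
        · rw [Finsupp.single_eq_of_ne' (Ne.symm hx0), Finsupp.single_eq_of_ne' (Ne.symm hxd)]
          have hx1 : 0 < x.val := by
            rcases Nat.eq_zero_or_pos x.val with hz | hp
            · exact absurd (Fin.ext hz : x = i0) hx0
            · exact hp
          have hx2 : x.val < d := by
            have := x.isLt
            rcases Nat.lt_or_ge x.val d with hlt | hge
            · exact hlt
            · exact absurd (Fin.ext (show x.val = d by omega) : x = idd) hxd
          simpa using hzero x hx1 hx2
    have hvi0 : i0.val = 0 := rfl
    have hvidd : idd.val = d := rfl
    have hn : degA α = α i0 + α idd := by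
      conv_lhs => rw [hdec]
      rw [degA_add, degA_single, degA_single]
    have hw : wtA α = d * α idd := by
      conv_lhs => rw [hdec]
      rw [wtA_add, wtA_single, wtA_single, hvi0, hvidd]; omega
    have hmod : wtA α % d = 0 := by rw [hw]; exact Nat.mul_mod_right d _
    have hdiv : wtA α / d = α idd := by rw [hw]; exact Nat.mul_div_cancel_left _ hd1
    have em : (⟨min (wtA α % d) d, by omega⟩ : Fin (d + 1)) = i0 :=
      Fin.ext (show min (wtA α % d) d = 0 by rw [hmod]; simp)
    unfold nfExp
    rw [em, hmod, hdiv, if_pos rfl, if_pos rfl, hn, Finsupp.single_zero, add_zero]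
    rw [show α i0 + α idd - α idd = α i0 by omega]
    exact hdec

lemma phi_gen {d : ℕ} (s : Fin 2 → Fin d) :
    phi d (((expMatrix d).submatrix id s).det) = 0 := by
  rw [det_eq, map_sub, map_mul, map_mul, map_mul, map_mul]
  simp only [phi, aeval_C, aeval_X, algebraMap_eq]
  set s0 := (s 0).val
  set s1 := (s 1).val
  have key : (((s0 : ℂ) + 1) * s0.factorial) * (s1 + 1).factorial
      = (((s1 : ℂ) + 1) * s1.factorial) * (s0 + 1).factorial := by
    have : ((s0 + 1) * s0.factorial) * (s1 + 1).factorial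
        = ((s1 + 1) * s1.factorial) * (s0 + 1).factorial := by
      rw [← Nat.factorial_succ, ← Nat.factorial_succ]
      exact Nat.mul_comm _ _
    exact_mod_cast congrArg (Nat.cast : ℕ → ℂ) this
  have keyC : (C ((((s0 : ℂ) + 1) * s0.factorial) * (s1 + 1).factorial) : MvPolynomial (Fin 2) ℂ)
      = C ((((s1 : ℂ) + 1) * s1.factorial) * (s0 + 1).factorial) := by rw [key]
  simp only [smul_eq_C_mul]
  rw [sub_eq_zero]
  calc (C ((s0 : ℂ) + 1) * (C (s0.factorial : ℂ) * (X 0 * X 1 ^ s0) *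
        (C ((s1 + 1).factorial : ℂ) * (X 0 * X 1 ^ (s1 + 1)))) : MvPolynomial (Fin 2) ℂ)
      = C ((((s0 : ℂ) + 1) * s0.factorial) * (s1 + 1).factorial)
          * (X 0 * X 0 * (X 1 ^ s0 * X 1 ^ (s1 + 1))) := by
        simp only [map_mul]; ring
    _ = C ((((s1 : ℂ) + 1) * s1.factorial) * (s0 + 1).factorial)
          * (X 0 * X 0 * (X 1 ^ s1 * X 1 ^ (s0 + 1))) := by
        rw [keyC]
        ring
    _ = C ((s1 : ℂ) + 1) * (C (s1.factorial : ℂ) * (X 0 * X 1 ^ s1) *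
        (C ((s0 + 1).factorial : ℂ) * (X 0 * X 1 ^ (s0 + 1)))) := by
        simp only [map_mul]; ring


lemma X_as_monomial (a : Fin (d + 1)) :
    (X a : MvPolynomial (Fin (d + 1)) ℂ) = monomial (Finsupp.single a 1) 1 := by
  rw [← pow_one (X a), X_pow_eq_monomial]

lemma monomial_mul_X_X (β : Fin (d + 1) →₀ ℕ) (a b : Fin (d + 1)) :
    monomial β (1 : ℂ) * (X a * X b) =
      monomial (β + Finsupp.single a 1 + Finsupp.single b 1) 1 := by
  rw [X_as_monomial, X_as_monomial, monomial_mul, monomial_mul, mul_one, mul_one, add_assoc]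

lemma smul_mem_ideal {I : Ideal (MvPolynomial (Fin (d + 1)) ℂ)} {f : MvPolynomial (Fin (d + 1)) ℂ}
    (c : ℂ) (hf : f ∈ I) : C c * f ∈ I := I.mul_mem_left _ hf

lemma mem_of_C_mul_mem {I : Ideal (MvPolynomial (Fin (d + 1)) ℂ)}
    {f : MvPolynomial (Fin (d + 1)) ℂ} {c : ℂ} (hc : c ≠ 0) (h : C c * f ∈ I) : f ∈ I := by
  have := smul_mem_ideal (c⁻¹) h
  rwa [← mul_assoc, ← map_mul, inv_mul_cancel₀ hc, map_one, one_mul] at this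

set_option maxHeartbeats 2000000 in
theorem monomial_congr (hd : 2 ≤ d) (α : Fin (d + 1) →₀ ℕ) :
    C (cC (nfExp d (degA α) (wtA α))) * monomial α 1 -
      C (cC α) * monomial (nfExp d (degA α) (wtA α)) 1 ∈ expIdeal d := by
  suffices H : ∀ N : ℕ, ∀ α : Fin (d + 1) →₀ ℕ, degA α * d * d - sqA α < N →
      C (cC (nfExp d (degA α) (wtA α))) * monomial α 1 -
        C (cC α) * monomial (nfExp d (degA α) (wtA α)) 1 ∈ expIdeal d by
    exact H (degA α * d * d + 1) α (by omega)
  intro N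
  induction N with
  | zero => intro α h; omega
  | succ N ih =>
    intro α hN
    by_cases hR : ∃ i j : Fin (d + 1), 0 < i.val ∧ j.val < d ∧ i ≤ j ∧ 1 ≤ α i ∧ 1 ≤ α j ∧
        (i = j → 2 ≤ α i)
    · obtain ⟨i, j, hi, hj, hij, hαi, hαj, h2⟩ := hR
      set β : Fin (d + 1) →₀ ℕ := α - Finsupp.single i 1 - Finsupp.single j 1 with hβdef
      have hdec : α = β + Finsupp.single i 1 + Finsupp.single j 1 := by
        ext x
        have hβx : β x = α x - (if i = x then 1 else 0) - (if j = x then 1 else 0) := by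
          rw [hβdef, Finsupp.tsub_apply, Finsupp.tsub_apply, Finsupp.single_apply,
            Finsupp.single_apply]
        simp only [Finsupp.coe_add, Pi.add_apply, Finsupp.single_apply, hβx]
        by_cases hxi : i = x <;> by_cases hxj : j = x
        · have hij' : i = j := hxi.trans hxj.symm
          have h2x : 2 ≤ α x := hxi ▸ h2 hij'
          simp only [if_pos hxi, if_pos hxj]
          omega
        · have h1x : 1 ≤ α x := hxi ▸ hαi
          simp only [if_pos hxi, if_neg hxj]
          omega
        · have h1x : 1 ≤ α x := hxj ▸ hαj
          simp only [if_neg hxi, if_pos hxj]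
          omega
        · simp only [if_neg hxi, if_neg hxj]
          omega
      set i' : Fin (d + 1) := ⟨i.val - 1, by omega⟩ with hi'def
      set j' : Fin (d + 1) := ⟨j.val + 1, by omega⟩ with hj'def
      obtain ⟨α', hα'def⟩ : ∃ γ : Fin (d + 1) →₀ ℕ,
          γ = β + Finsupp.single i' 1 + Finsupp.single j' 1 := ⟨_, rfl⟩
      have hvi' : i'.val = i.val - 1 := rfl
      have hvj' : j'.val = j.val + 1 := rfl
      have hdeg : degA α' = degA α := by
        rw [hα'def, degA_add, degA_add, degA_single, degA_single]
        conv_rhs => rw [hdec]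
        rw [degA_add, degA_add, degA_single, degA_single]
      have hwt : wtA α' = wtA α := by
        rw [hα'def, wtA_add, wtA_add, wtA_single, wtA_single]
        conv_rhs => rw [hdec]
        rw [wtA_add, wtA_add, wtA_single, wtA_single, hvi', hvj']
        omega
      have hsq : sqA α < sqA α' := by
        rw [hα'def, sqA_add, sqA_add, sqA_single, sqA_single]
        conv_lhs => rw [hdec]
        rw [sqA_add, sqA_add, sqA_single, sqA_single, hvi', hvj']
        obtain ⟨a, ha⟩ : ∃ a, i.val = a + 1 := ⟨i.val - 1, by omega⟩
        have haj : a + 1 ≤ j.val := by have := Fin.le_def.mp hij; omega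
        rw [ha]
        have expand : a + 1 - 1 = a := by omega
        rw [expand]
        nlinarith
      have hsqle : sqA α' ≤ degA α' * d * d := sqA_le α'
      have hmeas : degA α' * d * d - sqA α' < N := by
        have h1 : degA α * d * d - sqA α ≤ N := by omega
        rw [hdeg] at hsqle ⊢
        omega
      have IH := ih α' hmeas
      rw [hdeg, hwt] at IH
      set nf : Fin (d + 1) →₀ ℕ := nfExp d (degA α) (wtA α) with hnfdef
      -- the generator relation, multiplied by the monomial β
      have hrel := rel_mem i j hi hij hj
      have hGmem : monomial β (1 : ℂ) *
          (C ((i.val : ℂ)) * (X i' * X j') - C ((j.val : ℂ) + 1) * (X j * X i)) ∈ expIdeal d :=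
        (expIdeal d).mul_mem_left _ hrel
      have hexpand : monomial β (1 : ℂ) *
          (C ((i.val : ℂ)) * (X i' * X j') - C ((j.val : ℂ) + 1) * (X j * X i)) =
          C ((i.val : ℂ)) * monomial α' 1 - C ((j.val : ℂ) + 1) * monomial α 1 := by
        rw [mul_sub]
        rw [mul_left_comm, monomial_mul_X_X, mul_left_comm, monomial_mul_X_X]
        rw [← hα'def]
        congr 3
        conv_rhs => rw [hdec]
        rw [add_assoc, add_assoc, add_comm (Finsupp.single i 1)]
      rw [hexpand] at hGmem
      -- scalar identity
      have hcα : cC α = cC β * (i.val.factorial : ℂ) * (j.val.factorial : ℂ) := by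
        conv_lhs => rw [hdec]
        rw [cC_add, cC_add, cC_single, cC_single, pow_one, pow_one, mul_assoc]
      have hcα' : cC α' = cC β * ((i.val - 1).factorial : ℂ) * ((j.val + 1).factorial : ℂ) := by
        rw [hα'def, cC_add, cC_add, cC_single, cC_single, pow_one, pow_one, hvi', hvj',
          mul_assoc]
      have f1 : (i.val : ℂ) * ((i.val - 1).factorial : ℂ) = (i.val.factorial : ℂ) := by
        exact_mod_cast congrArg (Nat.cast : ℕ → ℂ) (Nat.mul_factorial_pred hi.ne')
      have f2 : ((j.val : ℂ) + 1) * (j.val.factorial : ℂ) = ((j.val + 1).factorial : ℂ) := by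
        rw [Nat.factorial_succ]
        push_cast
        ring
      have key : (i.val : ℂ) * cC α' = ((j.val : ℂ) + 1) * cC α := by
        rw [hcα, hcα']
        linear_combination (cC β * ((j.val + 1).factorial : ℂ)) * f1 -
          (cC β * (i.val.factorial : ℂ)) * f2
      have keyC : (C ((i.val : ℂ)) * C (cC α') : MvPolynomial (Fin (d + 1)) ℂ)
          = C ((j.val : ℂ) + 1) * C (cC α) := by
        rw [← map_mul, ← map_mul, key]
      have assembly : C ((j.val : ℂ) + 1) * (C (cC nf) * monomial α 1 - C (cC α) * monomial nf 1)
          = (- C (cC nf)) * (C ((i.val : ℂ)) * monomial α' 1 - C ((j.val : ℂ) + 1) * monomial α 1)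
            + C ((i.val : ℂ)) * (C (cC nf) * monomial α' 1 - C (cC α') * monomial nf 1) := by
        linear_combination (monomial nf (1 : ℂ)) * keyC
      have hmem2 : C ((j.val : ℂ) + 1) *
          (C (cC nf) * monomial α 1 - C (cC α) * monomial nf 1) ∈ expIdeal d := by
        rw [assembly]
        exact Ideal.add_mem _ ((expIdeal d).mul_mem_left _ hGmem)
          ((expIdeal d).mul_mem_left _ IH)
      have hjne : ((j.val : ℂ) + 1) ≠ 0 := by
        have : (0:ℝ) ≤ (j.val : ℝ) := Nat.cast_nonneg _
        intro hc
        have : ((j.val : ℂ) + 1) = ((j.val + 1 : ℕ) : ℂ) := by push_cast; ring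
        rw [this] at hc
        exact Nat.cast_ne_zero.mpr (by omega) hc
      exact mem_of_C_mul_mem hjne hmem2
    · push_neg at hR
      have heq : α = nfExp d (degA α) (wtA α) := eq_nf hd α (by
        intro i j hi hj hij hαi hαj
        have := hR i j hi hj hij hαi hαj
        exact ⟨this.1, by omega⟩)
      rw [← heq, sub_self]
      exact Ideal.zero_mem _

noncomputable def NForm (d n w : ℕ) : MvPolynomial (Fin (d + 1)) ℂ :=
  (cC (nfExp d n w))⁻¹ • monomial (nfExp d n w) 1

noncomputable def theta (d : ℕ) (p : MvPolynomial (Fin 2) ℂ) : MvPolynomial (Fin (d + 1)) ℂ :=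
  (AddMonoidAlgebra.coeff p).sum fun m c => c • NForm d (m 0) (m 1)

lemma theta_zero : theta d 0 = 0 := Finsupp.sum_zero_index

lemma theta_add (p q : MvPolynomial (Fin 2) ℂ) :
    theta d (p + q) = theta d p + theta d q :=
  Finsupp.sum_add_index' (fun m => by simp) (fun m c1 c2 => add_smul _ _ _)

lemma theta_monomial (M : Fin 2 →₀ ℕ) (c : ℂ) :
    theta d (monomial M c) = c • NForm d (M 0) (M 1) :=
  sum_monomial_eq (by simp)

lemma sub_theta_mem (hd : 2 ≤ d) (f : MvPolynomial (Fin (d + 1)) ℂ) :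
    f - theta d (phi d f) ∈ expIdeal d := by
  induction f using MvPolynomial.induction_on' with
  | add p q hp hq =>
    rw [map_add, theta_add]
    have := Ideal.add_mem _ hp hq
    convert this using 1
    ring
  | monomial α a =>
    rw [phi_monomial, theta_monomial]
    have h0 : ((Finsupp.single (0 : Fin 2) (degA α) + Finsupp.single (1 : Fin 2) (wtA α) :
        Fin 2 →₀ ℕ)) 0 = degA α := by
      simp
    have h1 : ((Finsupp.single (0 : Fin 2) (degA α) + Finsupp.single (1 : Fin 2) (wtA α) :
        Fin 2 →₀ ℕ)) 1 = wtA α := by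
      simp
    rw [h0, h1]
    have hmc := monomial_congr hd α
    have hne := cC_ne_zero (nfExp d (degA α) (wtA α))
    have hmem := smul_mem_ideal (a * (cC (nfExp d (degA α) (wtA α)))⁻¹) hmc
    convert hmem using 1
    rw [NForm, smul_smul, smul_eq_C_mul, mul_sub, ← mul_assoc, ← mul_assoc, ← map_mul, ← map_mul]
    rw [C_mul_monomial, C_mul_monomial, C_mul_monomial]
    congr 1
    · congr 1
      field_simp
    · congr 1
      ring

lemma mem_expIdeal_of_phi_eq_zero (hd : 2 ≤ d) (f : MvPolynomial (Fin (d + 1)) ℂ)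
    (h : phi d f = 0) : f ∈ expIdeal d := by
  have := sub_theta_mem hd f
  rwa [h, theta_zero, sub_zero] at this

lemma phi_eq_zero_of_mem (f : MvPolynomial (Fin (d + 1)) ℂ) (h : f ∈ expIdeal d) :
    phi d f = 0 := by
  have hle : expIdeal d ≤ RingHom.ker (phi d).toRingHom := by
    rw [expIdeal, Ideal.span_le]
    rintro p ⟨s, hs, rfl⟩
    exact RingHom.mem_ker.mpr (phi_gen s)
  exact RingHom.mem_ker.mp (hle h)

lemma expIdeal_eq_ker (hd : 2 ≤ d) :
    expIdeal d = RingHom.ker (phi d).toRingHom := by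
  ext f
  exact ⟨fun h => RingHom.mem_ker.mpr (phi_eq_zero_of_mem f h),
    fun h => mem_expIdeal_of_phi_eq_zero hd f (RingHom.mem_ker.mp h)⟩

lemma expIdeal_isPrime (hd : 2 ≤ d) : (expIdeal d).IsPrime := by
  rw [expIdeal_eq_ker hd]
  exact RingHom.ker_isPrime _

lemma eval_phi (f : MvPolynomial (Fin (d + 1)) ℂ) (x : Fin 2 → ℂ) :
    eval x (phi d f) =
      eval (fun i : Fin (d + 1) => x 0 * (i.val.factorial : ℂ) * (x 1) ^ i.val) f := by
  have haee : ∀ (n : ℕ) (y : Fin n → ℂ) (p : MvPolynomial (Fin n) ℂ),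
      (aeval y : MvPolynomial (Fin n) ℂ →ₐ[ℂ] ℂ) p = eval y p := fun n y p => by
    rw [← coe_aeval_eq_eval]; rfl
  rw [← haee, ← haee, phi, comp_aeval_apply]
  have harg : (fun i : Fin (d + 1) =>
      (aeval x : MvPolynomial (Fin 2) ℂ →ₐ[ℂ] ℂ) ((i.val.factorial : ℂ) • (X 0 * X 1 ^ i.val)))
      = fun i : Fin (d + 1) => x 0 * (i.val.factorial : ℂ) * (x 1) ^ i.val := by
    funext i
    simp only [map_smul, map_mul, map_pow, aeval_X, smul_eq_mul]
    ring
  rw [harg]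

end ExpMoment


/-- `I₂(E)` is prime and equals the vanishing ideal of the affine cone
`{ t·(0!, 1!·λ, 2!·λ², …, d!·λ^d) : t, λ ∈ ℂ }` over the exponential moment
parameterization; in particular the exponential moment variety is a rational normal
curve. -/
theorem exp_momentVariety (d : ℕ) (hd : 2 ≤ d) :
    (expIdeal d).IsPrime ∧
      ∀ f : MvPolynomial (Fin (d + 1)) ℂ,
        (∀ t lam : ℂ,
            eval (fun i : Fin (d + 1) => t * (i.val.factorial : ℂ) * lam ^ i.val) f = 0) ↔
          f ∈ expIdeal d := by
  refine ⟨ExpMoment.expIdeal_isPrime hd, fun f => ⟨fun h => ?_, fun hf t lam => ?_⟩⟩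
  · refine ExpMoment.mem_expIdeal_of_phi_eq_zero hd f (MvPolynomial.funext fun x => ?_)
    rw [map_zero, ExpMoment.eval_phi]
    exact h (x 0) (x 1)
  · have h0 : ExpMoment.phi d f = 0 := ExpMoment.phi_eq_zero_of_mem f hf
    have := ExpMoment.eval_phi f ![t, lam]
    rw [h0, map_zero] at this
    have h2 : (fun i : Fin (d + 1) =>
        (![t, lam] : Fin 2 → ℂ) 0 * (i.val.factorial : ℂ) * ((![t, lam] : Fin 2 → ℂ) 1) ^ i.val)
        = fun i : Fin (d + 1) => t * (i.val.factorial : ℂ) * lam ^ i.val := by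
      funext i
      simp
    rw [h2] at this
    exact this.symm
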